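/- Let x₁, y₁, x₂, y₂ be real numbers, set x = x₁ + x₂, y = y₁ + y₂, and let z = (1 + x² − y² + 2x − 4x₁) + i(2y + 2xy − 4y₁). Suppose 1 + x > 2 and (2(x−1)² − Re z)² − (Re z)² − (Im z)² > 0 and 2(x−1)² − Re z > 0. Then (1 + x) − √((|z| + Re z)/2) > 2. -/

import Mathlib

/-- Key inequality in the string-instability proof: if `1 + x > 2`,
`(2(x-1)² - Re z)² - (Re z)² - (Im z)² > 0` and `2(x-1)² - Re z > 0`, where
`z = (1 + x² - y² + 2x - 4x₁) + i(2y + 2xy - 4y₁)` with `x = x₁+x₂`, `y = y₁+y₂`,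
then `(1 + x) - √((|z| + Re z)/2) > 2`. -/
theorem stmt_10 (x₁ y₁ x₂ y₂ : ℝ)
    (z : ℂ)
    (hz : z = Complex.mk
      (1 + (x₁ + x₂) ^ 2 - (y₁ + y₂) ^ 2 + 2 * (x₁ + x₂) - 4 * x₁)
      (2 * (y₁ + y₂) + 2 * (x₁ + x₂) * (y₁ + y₂) - 4 * y₁))
    (hx : 1 + (x₁ + x₂) > 2)
    (hineq : (2 * ((x₁ + x₂) - 1) ^ 2 - z.re) ^ 2 - z.re ^ 2 - z.im ^ 2 > 0)
    (hpos : 2 * ((x₁ + x₂) - 1) ^ 2 - z.re > 0) :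
    (1 + (x₁ + x₂)) - Real.sqrt ((‖z‖ + z.re) / 2) > 2 := by
  have habs : ‖z‖ < 2 * ((x₁ + x₂) - 1) ^ 2 - z.re := by
    have h1 : (‖z‖) ^ 2 < (2 * ((x₁ + x₂) - 1) ^ 2 - z.re) ^ 2 := by
      rw [Complex.sq_norm, Complex.normSq_apply]
      nlinarith
    exact lt_of_pow_lt_pow_left₀ 2 hpos.le h1
  have hx1 : (0:ℝ) < (x₁ + x₂) - 1 := by linarith
  have hsqrt : Real.sqrt ((‖z‖ + z.re) / 2) < (x₁ + x₂) - 1 := by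
    rw [Real.sqrt_lt' hx1]
    nlinarith
  linarith
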